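/- Let s be a normalized complete Pick kernel on a set X realized by an RKHS (H_s, s), let g be a positive semidefinite kernel on X with g(x,x) > 0 for all x ∈ X, and let (H_ℓ, ℓ) be an RKHS on X whose kernel satisfies ⟨ℓ_w, ℓ_z⟩ = g(z,w)·⟨s_w, s_z⟩ for all z, w ∈ X. If a sequence (λ_i) of distinct points of X is an interpolating sequence for H_s, then it is an interpolating sequence for H_ℓ. -/

import Mathlib

noncomputable section

open scoped InnerProductSpace ComplexOrder

/-- `φ : X → ℂ` is a multiplier from the RKHS on `X` with kernel map `k` to the RKHS with
kernel map `l`, implemented by the bounded operator `T`, i.e. `T* l_x = conj (φ x) • k_x`. -/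
def IsMultiplier {X Hk Hl : Type*}
    [NormedAddCommGroup Hk] [InnerProductSpace ℂ Hk] [CompleteSpace Hk]
    [NormedAddCommGroup Hl] [InnerProductSpace ℂ Hl] [CompleteSpace Hl]
    (k : X → Hk) (l : X → Hl) (φ : X → ℂ) (T : Hk →L[ℂ] Hl) : Prop :=
  ∀ x, ContinuousLinearMap.adjoint T (l x) = (starRingEnd ℂ) (φ x) • k x

/-- The sequence `lam` is an interpolating sequence for the RKHS with kernel map `k`:
the map `f ↦ (⟪k (lam i), f⟫ / ‖k (lam i)‖)ᵢ` is bounded from `H` onto `ℓ²`. -/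
def InterpSpace {X H : Type*} [NormedAddCommGroup H] [InnerProductSpace ℂ H]
    (k : X → H) (lam : ℕ → X) : Prop :=
  (∃ C > (0 : ℝ), ∀ f : H, ∀ F : Finset ℕ,
      ∑ i ∈ F, ‖⟪k (lam i), f⟫_ℂ‖ ^ 2 / ‖k (lam i)‖ ^ 2 ≤ C * ‖f‖ ^ 2) ∧
  ∀ a : ℕ → ℂ, Memℓp a 2 →
    ∃ f : H, ∀ i, ⟪k (lam i), f⟫_ℂ / (‖k (lam i)‖ : ℂ) = a i

/-! ### Auxiliary lemmas -/

open scoped ENNReal Topology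

section AuxLemmas

variable {H : Type*} [NormedAddCommGroup H] [InnerProductSpace ℂ H]

private lemma aux_two_toReal_pos : (0:ℝ) < (2 : ℝ≥0∞).toReal := by norm_num

private lemma aux_rpow_two_toReal (x : ℝ) (hx : 0 ≤ x) :
    x ^ ((2:ℝ≥0∞).toReal) = x ^ (2:ℕ) := by
  rw [show ((2:ℝ≥0∞).toReal) = ((2:ℕ):ℝ) by norm_num, Real.rpow_natCast]

private lemma aux_inner_sum_smul_sum_smul {E : Type*} [NormedAddCommGroup E]
    [InnerProductSpace ℂ E] (F : Finset ℕ) (e : ℕ → E) (a : ℕ → ℂ) :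
    ⟪∑ i ∈ F, a i • e i, ∑ j ∈ F, a j • e j⟫_ℂ
      = ∑ i ∈ F, ∑ j ∈ F, (starRingEnd ℂ) (a i) * (a j * ⟪e i, e j⟫_ℂ) := by
  rw [sum_inner]
  refine Finset.sum_congr rfl fun i _ => ?_
  rw [inner_smul_left, inner_sum, Finset.mul_sum]
  refine Finset.sum_congr rfl fun j _ => ?_
  rw [inner_smul_right]

/-- Synthesis (column) bound from analysis (Bessel) bound. -/
private lemma aux_synth_of_anal (v : ℕ → H) (C : ℝ) (hC : 0 ≤ C)
    (h : ∀ f : H, ∀ F : Finset ℕ, ∑ i ∈ F, ‖⟪v i, f⟫_ℂ‖ ^ 2 ≤ C * ‖f‖ ^ 2) :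
    ∀ (F : Finset ℕ) (c : ℕ → ℂ),
      ‖∑ i ∈ F, c i • v i‖ ^ 2 ≤ C * ∑ i ∈ F, ‖c i‖ ^ 2 := by
  intro F c
  set f := ∑ i ∈ F, c i • v i with hf
  have key : (‖f‖ ^ 2) ^ 2 ≤ (∑ i ∈ F, ‖c i‖ ^ 2) * (C * ‖f‖ ^ 2) := by
    have h1 : (⟪f, f⟫_ℂ) = ∑ i ∈ F, (starRingEnd ℂ) (c i) * ⟪v i, f⟫_ℂ := by
      rw [hf, sum_inner]
      exact Finset.sum_congr rfl fun i _ => inner_smul_left _ _ _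
    have h2 : ‖f‖ ^ 2 ≤ ∑ i ∈ F, ‖c i‖ * ‖⟪v i, f⟫_ℂ‖ := by
      calc ‖f‖ ^ 2 = ‖(⟪f, f⟫_ℂ)‖ := by
            rw [inner_self_eq_norm_sq_to_K]; push_cast [norm_pow]; simp
        _ ≤ ∑ i ∈ F, ‖(starRingEnd ℂ) (c i) * ⟪v i, f⟫_ℂ‖ := by
            rw [h1]; exact norm_sum_le _ _
        _ = ∑ i ∈ F, ‖c i‖ * ‖⟪v i, f⟫_ℂ‖ := by
            simp [norm_mul]
    have h3 : (∑ i ∈ F, ‖c i‖ * ‖⟪v i, f⟫_ℂ‖) ^ 2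
        ≤ (∑ i ∈ F, ‖c i‖ ^ 2) * ∑ i ∈ F, ‖⟪v i, f⟫_ℂ‖ ^ 2 :=
      Finset.sum_mul_sq_le_sq_mul_sq F _ _
    calc (‖f‖ ^ 2) ^ 2 ≤ (∑ i ∈ F, ‖c i‖ * ‖⟪v i, f⟫_ℂ‖) ^ 2 := by
          apply pow_le_pow_left₀ (by positivity) h2
      _ ≤ (∑ i ∈ F, ‖c i‖ ^ 2) * ∑ i ∈ F, ‖⟪v i, f⟫_ℂ‖ ^ 2 := h3
      _ ≤ (∑ i ∈ F, ‖c i‖ ^ 2) * (C * ‖f‖ ^ 2) := by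
          apply mul_le_mul_of_nonneg_left (h f F) (by positivity)
  rcases eq_or_lt_of_le (sq_nonneg ‖f‖) with h0 | h0
  · rw [← h0]; positivity
  · have := le_of_mul_le_mul_right
      (by linarith [key] : ‖f‖^2 * ‖f‖^2 ≤ (C * ∑ i ∈ F, ‖c i‖ ^ 2) * ‖f‖^2) h0
    linarith

/-- Analysis (Bessel) bound from synthesis (column) bound. -/
private lemma aux_anal_of_synth (v : ℕ → H) (C : ℝ) (hC : 0 ≤ C)
    (h : ∀ (F : Finset ℕ) (c : ℕ → ℂ),
      ‖∑ i ∈ F, c i • v i‖ ^ 2 ≤ C * ∑ i ∈ F, ‖c i‖ ^ 2) :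
    ∀ f : H, ∀ F : Finset ℕ, ∑ i ∈ F, ‖⟪v i, f⟫_ℂ‖ ^ 2 ≤ C * ‖f‖ ^ 2 := by
  intro f F
  set S := ∑ i ∈ F, ‖⟪v i, f⟫_ℂ‖ ^ 2 with hS
  have hS0 : 0 ≤ S := by positivity
  set gg := ∑ i ∈ F, (⟪v i, f⟫_ℂ) • v i with hg
  have h1 : ⟪gg, f⟫_ℂ = (S : ℂ) := by
    rw [hg, sum_inner, hS]
    push_cast
    refine Finset.sum_congr rfl fun i _ => ?_
    rw [inner_smul_left]
    rw [Complex.conj_mul']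
  have h2 : S ≤ ‖gg‖ * ‖f‖ := by
    calc S = ‖(⟪gg, f⟫_ℂ)‖ := by rw [h1]; simp [abs_of_nonneg hS0]
      _ ≤ ‖gg‖ * ‖f‖ := norm_inner_le_norm _ _
  have h3 : ‖gg‖ ^ 2 ≤ C * S := by
    have := h F (fun i => ⟪v i, f⟫_ℂ)
    simpa [hS] using this
  have key : S ^ 2 ≤ (C * ‖f‖ ^ 2) * S := by
    calc S ^ 2 ≤ (‖gg‖ * ‖f‖) ^ 2 := pow_le_pow_left₀ hS0 h2 2
      _ = ‖gg‖ ^ 2 * ‖f‖ ^ 2 := by ring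
      _ ≤ (C * S) * ‖f‖ ^ 2 := by
          apply mul_le_mul_of_nonneg_right h3 (by positivity)
      _ = (C * ‖f‖ ^ 2) * S := by ring
  rcases eq_or_lt_of_le hS0 with h0 | h0
  · rw [← h0]; positivity
  · have := le_of_mul_le_mul_right (by linarith [key] : S * S ≤ (C * ‖f‖ ^ 2) * S) h0
    linarith

/-- The Schur-product trick: if the Gram matrix of `w` is the entrywise product of the
Gram matrix of unit vectors `u` and the Gram matrix of `v`, then quadratic forms in `w`
decompose as sums of quadratic forms in `v` with the same total coefficient mass. -/
private lemma aux_schur_key {M W : Type*} [NormedAddCommGroup M] [InnerProductSpace ℂ M]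
    [NormedAddCommGroup W] [InnerProductSpace ℂ W]
    (u : ℕ → M) (hu : ∀ i, ‖u i‖ = 1) (v : ℕ → H) (w : ℕ → W)
    (hw : ∀ i j, ⟪w i, w j⟫_ℂ = ⟪u i, u j⟫_ℂ * ⟪v i, v j⟫_ℂ)
    (F : Finset ℕ) (c : ℕ → ℂ) :
    ∃ (n : ℕ) (d : Fin n → ℕ → ℂ),
      ‖∑ i ∈ F, c i • w i‖ ^ 2 = ∑ k, ‖∑ i ∈ F, d k i • v i‖ ^ 2 ∧
      ∀ i ∈ F, ∑ k, ‖d k i‖ ^ 2 = ‖c i‖ ^ 2 := by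
  classical
  set V : Submodule ℂ M := Submodule.span ℂ ((F.image u : Finset M) : Set M) with hV
  have : FiniteDimensional ℂ V := FiniteDimensional.span_finset ℂ _
  set n := Module.finrank ℂ V with hn
  set b : OrthonormalBasis (Fin n) ℂ V := stdOrthonormalBasis ℂ V with hb
  have hmem : ∀ i ∈ F, u i ∈ V := by
    intro i hi
    exact Submodule.subset_span (by simp [Finset.mem_image]; exact ⟨i, hi, rfl⟩)
  have hpars : ∀ i ∈ F, ∑ k, ‖⟪(b k : M), u i⟫_ℂ‖ ^ 2 = 1 := by
    intro i hi
    have hrepr : ∀ k, ⟪(b k : M), u i⟫_ℂ = b.repr ⟨u i, hmem i hi⟩ k := by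
      intro k
      rw [OrthonormalBasis.repr_apply_apply]
      rfl
    simp_rw [hrepr]
    have h1 : ‖b.repr ⟨u i, hmem i hi⟩‖ = ‖(⟨u i, hmem i hi⟩ : V)‖ :=
      b.repr.norm_map _
    have h2 : ‖b.repr ⟨u i, hmem i hi⟩‖ ^ 2 = ∑ k, ‖b.repr ⟨u i, hmem i hi⟩ k‖ ^ 2 := by
      rw [EuclideanSpace.norm_eq, Real.sq_sqrt (by positivity)]
    rw [← h2, h1]
    have h3 : ‖(⟨u i, hmem i hi⟩ : V)‖ = ‖u i‖ := rfl
    rw [h3, hu i, one_pow]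
  have hsum_inner : ∀ i ∈ F, ∀ j ∈ F,
      ⟪u i, u j⟫_ℂ = ∑ k, ⟪u i, (b k : M)⟫_ℂ * ⟪(b k : M), u j⟫_ℂ := by
    intro i hi j hj
    have h := b.sum_inner_mul_inner (⟨u i, hmem i hi⟩ : V) (⟨u j, hmem j hj⟩ : V)
    exact h.symm
  refine ⟨n, fun k i => c i * ⟪(b k : M), u i⟫_ℂ, ?_, ?_⟩
  · -- main identity
    have key : ⟪∑ i ∈ F, c i • w i, ∑ j ∈ F, c j • w j⟫_ℂ
        = ∑ k : Fin n, ⟪∑ i ∈ F, (c i * ⟪(b k : M), u i⟫_ℂ) • v i,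
            ∑ j ∈ F, (c j * ⟪(b k : M), u j⟫_ℂ) • v j⟫_ℂ := by
      rw [aux_inner_sum_smul_sum_smul]
      have rhs : ∀ k : Fin n,
          ⟪∑ i ∈ F, (c i * ⟪(b k : M), u i⟫_ℂ) • v i,
            ∑ j ∈ F, (c j * ⟪(b k : M), u j⟫_ℂ) • v j⟫_ℂ
          = ∑ i ∈ F, ∑ j ∈ F, (starRingEnd ℂ) (c i * ⟪(b k : M), u i⟫_ℂ)
              * ((c j * ⟪(b k : M), u j⟫_ℂ) * ⟪v i, v j⟫_ℂ) :=
        fun k => aux_inner_sum_smul_sum_smul F v _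
      simp only [rhs]
      conv_rhs => rw [Finset.sum_comm]
      refine Finset.sum_congr rfl fun i hi => ?_
      conv_rhs => rw [Finset.sum_comm]
      refine Finset.sum_congr rfl fun j hj => ?_
      rw [hw i j, hsum_inner i hi j hj, Finset.sum_mul, Finset.mul_sum, Finset.mul_sum]
      refine Finset.sum_congr rfl fun k _ => ?_
      simp only [map_mul]
      have : (starRingEnd ℂ) ⟪(b k : M), u i⟫_ℂ = ⟪u i, (b k : M)⟫_ℂ :=
        inner_conj_symm _ _
      rw [this]
      ring
    have lhs : ⟪∑ i ∈ F, c i • w i, ∑ j ∈ F, c j • w j⟫_ℂ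
        = ((‖∑ i ∈ F, c i • w i‖ ^ 2 : ℝ) : ℂ) := by
      rw [inner_self_eq_norm_sq_to_K]; norm_cast
    have rhs2 : ∀ k : Fin n, ⟪∑ i ∈ F, (c i * ⟪(b k : M), u i⟫_ℂ) • v i,
            ∑ j ∈ F, (c j * ⟪(b k : M), u j⟫_ℂ) • v j⟫_ℂ
        = ((‖∑ i ∈ F, (c i * ⟪(b k : M), u i⟫_ℂ) • v i‖ ^ 2 : ℝ) : ℂ) := by
      intro k
      rw [inner_self_eq_norm_sq_to_K]; norm_cast
    rw [lhs] at key
    simp only [rhs2] at key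
    rw [← Complex.ofReal_sum] at key
    exact_mod_cast key
  · intro i hi
    calc ∑ k, ‖c i * ⟪(b k : M), u i⟫_ℂ‖ ^ 2
        = ∑ k, ‖c i‖ ^ 2 * ‖⟪(b k : M), u i⟫_ℂ‖ ^ 2 := by
          refine Finset.sum_congr rfl fun k _ => ?_
          rw [norm_mul, mul_pow]
      _ = ‖c i‖ ^ 2 * ∑ k, ‖⟪(b k : M), u i⟫_ℂ‖ ^ 2 := by rw [Finset.mul_sum]
      _ = ‖c i‖ ^ 2 := by rw [hpars i hi, mul_one]

/-- The analysis operator into `ℓ²`, as a continuous linear map. -/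
private lemma aux_exists_analysisCLM (v : ℕ → H) (C : ℝ) (hC : 0 ≤ C)
    (h : ∀ f : H, ∀ F : Finset ℕ, ∑ i ∈ F, ‖⟪v i, f⟫_ℂ‖ ^ 2 ≤ C * ‖f‖ ^ 2) :
    ∃ A : H →L[ℂ] lp (fun _ : ℕ => ℂ) 2, ∀ (f : H) (i : ℕ), A f i = ⟪v i, f⟫_ℂ := by
  have htr : (2 : ℝ≥0∞).toReal = (2 : ℝ) := by simp
  have mem : ∀ f : H, Memℓp (fun i => ⟪v i, f⟫_ℂ) 2 := by
    intro f
    apply memℓp_gen' (C := C * ‖f‖ ^ 2)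
    intro F
    calc ∑ i ∈ F, ‖⟪v i, f⟫_ℂ‖ ^ ((2:ℝ≥0∞).toReal)
        = ∑ i ∈ F, ‖⟪v i, f⟫_ℂ‖ ^ (2:ℕ) :=
          Finset.sum_congr rfl fun i _ => aux_rpow_two_toReal _ (norm_nonneg _)
      _ ≤ C * ‖f‖ ^ 2 := h f F
  let L : H →ₗ[ℂ] lp (fun _ : ℕ => ℂ) 2 :=
    { toFun := fun f => ⟨fun i => ⟪v i, f⟫_ℂ, mem f⟩
      map_add' := by
        intro f g
        apply lp.ext
        funext i
        simp [inner_add_right]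
        rfl
      map_smul' := by
        intro a f
        apply lp.ext
        funext i
        simp [inner_smul_right] }
  have hbound : ∀ f, ‖L f‖ ≤ Real.sqrt C * ‖f‖ := by
    intro f
    apply lp.norm_le_of_forall_sum_le (by rw [htr]; norm_num) (by positivity)
    intro F
    have h1 : ∀ i, ‖(L f) i‖ = ‖⟪v i, f⟫_ℂ‖ := fun i => rfl
    calc ∑ i ∈ F, ‖(L f) i‖ ^ ((2:ℝ≥0∞).toReal)
        = ∑ i ∈ F, ‖⟪v i, f⟫_ℂ‖ ^ (2:ℕ) :=
          Finset.sum_congr rfl fun i _ => by rw [h1, aux_rpow_two_toReal _ (norm_nonneg _)]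
      _ ≤ C * ‖f‖ ^ 2 := h f F
      _ = (Real.sqrt C * ‖f‖) ^ ((2:ℝ≥0∞).toReal) := by
          rw [aux_rpow_two_toReal _ (by positivity), mul_pow, Real.sq_sqrt hC]
  exact ⟨L.mkContinuous (Real.sqrt C) hbound, fun f i => rfl⟩

variable [CompleteSpace H]

/-- Surjectivity of the analysis operator gives a uniform lower (Riesz) bound. -/
private lemma aux_lower_of_surj (v : ℕ → H)
    (A : H →L[ℂ] lp (fun _ : ℕ => ℂ) 2) (hA : ∀ (f : H) (i : ℕ), A f i = ⟪v i, f⟫_ℂ)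
    (hsurj : ∀ a : ℕ → ℂ, Memℓp a 2 → ∃ f : H, ∀ i, ⟪v i, f⟫_ℂ = a i) :
    ∃ δ > (0:ℝ), ∀ (F : Finset ℕ) (c : ℕ → ℂ),
      δ * ∑ i ∈ F, ‖c i‖ ^ 2 ≤ ‖∑ i ∈ F, c i • v i‖ ^ 2 := by
  classical
  have hAsurj : Function.Surjective A := by
    intro y
    obtain ⟨f, hf⟩ := hsurj y (lp.memℓp y)
    exact ⟨f, lp.ext (funext fun i => by rw [hA f i, hf i])⟩
  obtain ⟨C', hC', hpre⟩ := A.exists_preimage_norm_le hAsurj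
  refine ⟨(C' ^ 2)⁻¹, by positivity, ?_⟩
  intro F c
  set y : lp (fun _ : ℕ => ℂ) 2 := ∑ i ∈ F, lp.single 2 i (c i) with hy
  have hyj : ∀ j, y j = if j ∈ F then c j else 0 := by
    intro j
    rw [hy]
    simp only [lp.coeFn_sum, Finset.sum_apply, lp.single_apply, Finset.sum_dite_eq]
    simp [Pi.single_apply, Finset.sum_ite_eq]
  have hynorm : ‖y‖ ^ 2 = ∑ i ∈ F, ‖c i‖ ^ 2 := by
    have := lp.norm_sum_single (E := fun _ : ℕ => ℂ) aux_two_toReal_pos c F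
    rw [aux_rpow_two_toReal _ (norm_nonneg _)] at this
    rw [← hy] at this
    rw [this]
    exact Finset.sum_congr rfl fun i _ => aux_rpow_two_toReal _ (norm_nonneg _)
  obtain ⟨f, hfy, hfn⟩ := hpre y
  set x := ∑ i ∈ F, c i • v i with hx
  have hinner : ⟪x, f⟫_ℂ = ((∑ i ∈ F, ‖c i‖ ^ 2 : ℝ) : ℂ) := by
    rw [hx, sum_inner]
    push_cast
    refine Finset.sum_congr rfl fun i hi => ?_
    rw [inner_smul_left]
    have : ⟪v i, f⟫_ℂ = y i := by rw [← hA f i, hfy]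
    rw [this, hyj i, if_pos hi, Complex.conj_mul']
  set S := ∑ i ∈ F, ‖c i‖ ^ 2 with hS
  have hS0 : 0 ≤ S := by positivity
  have h2 : S ≤ ‖x‖ * (C' * ‖y‖) := by
    calc S = ‖(⟪x, f⟫_ℂ)‖ := by rw [hinner]; simp [abs_of_nonneg hS0]
      _ ≤ ‖x‖ * ‖f‖ := norm_inner_le_norm _ _
      _ ≤ ‖x‖ * (C' * ‖y‖) := by
          apply mul_le_mul_of_nonneg_left hfn (norm_nonneg _)
  have hyS : ‖y‖ ^ 2 = S := hynorm
  have key : S ^ 2 ≤ (C' ^ 2 * ‖x‖ ^ 2) * S := by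
    have := mul_le_mul h2 h2 hS0 (by positivity)
    calc S ^ 2 = S * S := sq S
      _ ≤ (‖x‖ * (C' * ‖y‖)) * (‖x‖ * (C' * ‖y‖)) := this
      _ = (C' ^ 2 * ‖x‖ ^ 2) * (‖y‖ ^ 2) := by ring
      _ = (C' ^ 2 * ‖x‖ ^ 2) * S := by rw [hyS]
  rcases eq_or_lt_of_le hS0 with h0 | h0
  · rw [← h0, mul_zero]
    positivity
  · have hcan : S ≤ C' ^ 2 * ‖x‖ ^ 2 := by
      have := le_of_mul_le_mul_right (by calc S * S = S ^ 2 := (sq S).symm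
        _ ≤ (C' ^ 2 * ‖x‖ ^ 2) * S := key) h0
      linarith
    exact (inv_mul_le_iff₀ (by positivity)).2 (by linarith)

set_option maxHeartbeats 1000000 in
/-- Upper and lower frame bounds give surjectivity of the analysis operator. -/
private lemma aux_onto_of_bounds (v : ℕ → H)
    (A : H →L[ℂ] lp (fun _ : ℕ => ℂ) 2) (hA : ∀ (f : H) (i : ℕ), A f i = ⟪v i, f⟫_ℂ)
    (δ : ℝ) (hδ : 0 < δ)
    (hlow : ∀ (F : Finset ℕ) (c : ℕ → ℂ),
      δ * ∑ i ∈ F, ‖c i‖ ^ 2 ≤ ‖∑ i ∈ F, c i • v i‖ ^ 2) :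
    ∀ a : ℕ → ℂ, Memℓp a 2 → ∃ f : H, ∀ i, ⟪v i, f⟫_ℂ = a i := by
  classical
  set B := ContinuousLinearMap.adjoint A with hB
  have hBsingle : ∀ (F : Finset ℕ) (u : lp (fun _ : ℕ => ℂ) 2),
      B (∑ i ∈ F, lp.single 2 i (u i)) = ∑ i ∈ F, (u i) • v i := by
    intro F u
    apply ext_inner_right ℂ
    intro f
    rw [hB, ContinuousLinearMap.adjoint_inner_left, sum_inner, sum_inner]
    refine Finset.sum_congr rfl fun i _ => ?_
    rw [lp.inner_single_left, inner_smul_left, hA, RCLike.inner_apply]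
    ring
  have hBlow : ∀ u : lp (fun _ : ℕ => ℂ) 2, δ * ‖u‖ ^ 2 ≤ ‖B u‖ ^ 2 := by
    intro u
    have hsum : HasSum (fun i => lp.single 2 i (u i)) u :=
      lp.hasSum_single (by norm_num) u
    have hnsum : HasSum (fun i => ‖u i‖ ^ 2) (‖u‖ ^ 2) := by
      have hs : Summable fun i => ‖u i‖ ^ ((2:ℝ≥0∞).toReal) :=
        (lp.memℓp u).summable aux_two_toReal_pos
      have hs2 : Summable fun i => ‖u i‖ ^ (2:ℕ) := by
        convert hs using 2 with i
        rw [aux_rpow_two_toReal _ (norm_nonneg _)]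
      have htsum : ‖u‖ ^ 2 = ∑' i, ‖u i‖ ^ (2:ℕ) := by
        have h := lp.norm_rpow_eq_tsum aux_two_toReal_pos u
        rw [aux_rpow_two_toReal _ (norm_nonneg _)] at h
        rw [h]
        exact tsum_congr fun i => aux_rpow_two_toReal _ (norm_nonneg _)
      rw [htsum]
      exact hs2.hasSum
    have h1 : Filter.Tendsto (fun F : Finset ℕ => ∑ i ∈ F, δ * ‖u i‖ ^ 2)
        Filter.atTop (𝓝 (δ * ‖u‖ ^ 2)) := hnsum.mul_left δ
    have h2 : Filter.Tendsto (fun F : Finset ℕ => ‖B (∑ i ∈ F, lp.single 2 i (u i))‖ ^ 2)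
        Filter.atTop (𝓝 (‖B u‖ ^ 2)) := by
      have hc : Continuous fun x : lp (fun _ : ℕ => ℂ) 2 => ‖B x‖ ^ 2 :=
        (B.continuous.norm).pow 2
      exact (hc.tendsto u).comp hsum
    refine le_of_tendsto_of_tendsto' h1 h2 fun F => ?_
    rw [hBsingle F u, ← Finset.mul_sum]
    exact hlow F (fun i => u i)
  set T := A.comp B with hT
  have hTinner : ∀ u, ⟪u, T u⟫_ℂ = ((‖B u‖ ^ 2 : ℝ) : ℂ) := by
    intro u
    have h1 : ⟪B u, B u⟫_ℂ = ⟪u, A (B u)⟫_ℂ := by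
      rw [hB]
      exact ContinuousLinearMap.adjoint_inner_left A (B u) u
    have h2 : ⟪B u, B u⟫_ℂ = ((‖B u‖ ^ 2 : ℝ) : ℂ) := by
      rw [inner_self_eq_norm_sq_to_K]; norm_cast
    rw [hT, ContinuousLinearMap.comp_apply, ← h1, h2]
  have hTlow : ∀ u, δ * ‖u‖ ≤ ‖T u‖ := by
    intro u
    rcases eq_or_ne u 0 with rfl | hu
    · simp
    have h3 : δ * ‖u‖ ^ 2 ≤ ‖u‖ * ‖T u‖ := by
      calc δ * ‖u‖ ^ 2 ≤ ‖B u‖ ^ 2 := hBlow u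
        _ = ‖(⟪u, T u⟫_ℂ)‖ := by
            have hnn : (0:ℝ) ≤ ‖B u‖ ^ 2 := sq_nonneg _
            rw [hTinner]
            simp [abs_of_nonneg hnn]
        _ ≤ ‖u‖ * ‖T u‖ := norm_inner_le_norm _ _
    have hu0 : 0 < ‖u‖ := norm_pos_iff.2 hu
    have := le_of_mul_le_mul_left (by nlinarith : ‖u‖ * (δ * ‖u‖) ≤ ‖u‖ * ‖T u‖) hu0
    linarith
  have hanti : AntilipschitzWith (Real.toNNReal δ⁻¹) T := by
    apply ContinuousLinearMap.antilipschitz_of_bound T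
    intro u
    have hc : (Real.toNNReal δ⁻¹ : ℝ) = δ⁻¹ := Real.coe_toNNReal _ (by positivity)
    rw [hc, ← div_eq_inv_mul, le_div_iff₀ hδ, mul_comm]
    exact hTlow u
  have hclosed : IsClosed (Set.range T) := hanti.isClosed_range T.uniformContinuous
  have hTzero : ∀ u : lp (fun _ : ℕ => ℂ) 2, ⟪T u, u⟫_ℂ = 0 → u = 0 := by
    intro u h0
    have h0' : ⟪u, T u⟫_ℂ = 0 := by
      rw [← inner_conj_symm, h0, map_zero]
    have hc : ((‖B u‖ ^ 2 : ℝ) : ℂ) = 0 := by rw [← hTinner, h0']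
    have hB0 : ‖B u‖ ^ 2 = 0 := by exact_mod_cast hc
    have h3 := hBlow u
    rw [hB0] at h3
    have h5 : ‖u‖ ^ 2 ≤ 0 := by
      have := mul_le_mul_of_nonneg_left h3 (le_of_lt (inv_pos.2 hδ))
      rw [← mul_assoc, inv_mul_cancel₀ (ne_of_gt hδ), one_mul, mul_zero] at this
      exact this
    have h6 : ‖u‖ ^ 2 = 0 := le_antisymm h5 (sq_nonneg _)
    have h7 : ‖u‖ = 0 := by
      exact pow_eq_zero_iff (by norm_num) |>.1 h6
    exact norm_eq_zero.1 h7
  have hRclosed : IsClosed ((LinearMap.range (T : lp (fun _ : ℕ => ℂ) 2 →ₗ[ℂ] lp (fun _ : ℕ => ℂ) 2) : Submodule ℂ (lp (fun _ : ℕ => ℂ) 2)) :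
      Set (lp (fun _ : ℕ => ℂ) 2)) := by
    have he : ((LinearMap.range (T : lp (fun _ : ℕ => ℂ) 2 →ₗ[ℂ] lp (fun _ : ℕ => ℂ) 2) : Submodule ℂ (lp (fun _ : ℕ => ℂ) 2)) :
        Set (lp (fun _ : ℕ => ℂ) 2)) = Set.range T := LinearMap.coe_range _
    rw [he]
    exact hclosed
  have horth : (LinearMap.range (T : lp (fun _ : ℕ => ℂ) 2 →ₗ[ℂ] lp (fun _ : ℕ => ℂ) 2) : Submodule ℂ (lp (fun _ : ℕ => ℂ) 2))ᗮ = ⊥ := by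
    rw [Submodule.eq_bot_iff]
    intro u hu
    refine hTzero u ?_
    exact (Submodule.mem_orthogonal _ u).1 hu (T u) (LinearMap.mem_range_self (T : lp (fun _ : ℕ => ℂ) 2 →ₗ[ℂ] lp (fun _ : ℕ => ℂ) 2) u)
  have hRtop : (LinearMap.range (T : lp (fun _ : ℕ => ℂ) 2 →ₗ[ℂ] lp (fun _ : ℕ => ℂ) 2) : Submodule ℂ (lp (fun _ : ℕ => ℂ) 2)) = ⊤ := by
    have h1 := IsClosed.submodule_topologicalClosure_eq hRclosed
    have h2 := Submodule.topologicalClosure_eq_top_iff.2 horth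
    rw [← h1, h2]
  intro a ha
  have hmem : (⟨a, ha⟩ : lp (fun _ : ℕ => ℂ) 2) ∈
      (LinearMap.range (T : lp (fun _ : ℕ => ℂ) 2 →ₗ[ℂ] lp (fun _ : ℕ => ℂ) 2) : Submodule ℂ (lp (fun _ : ℕ => ℂ) 2)) := by
    rw [hRtop]; exact Submodule.mem_top
  obtain ⟨u, hu⟩ := hmem
  refine ⟨B u, fun i => ?_⟩
  have h5 : A (B u) = (⟨a, ha⟩ : lp (fun _ : ℕ => ℂ) 2) := hu
  rw [← hA (B u) i, h5]

end AuxLemmas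

set_option maxHeartbeats 2000000 in
/-- **Lemma 4.5 (c)**: if `s` is a normalized complete Pick kernel and `ℓ = g·s` with `g`
positive semidefinite and strictly positive on the diagonal, then every interpolating
sequence for `H_s` is interpolating for `H_ℓ`. -/
theorem statement11 {X Hs Hl : Type*}
    [NormedAddCommGroup Hs] [InnerProductSpace ℂ Hs] [CompleteSpace Hs]
    [NormedAddCommGroup Hl] [InnerProductSpace ℂ Hl] [CompleteSpace Hl]
    (s : X → Hs) (hs : ∀ x, s x ≠ 0)
    (hdense_s : Dense ((Submodule.span ℂ (Set.range s) : Submodule ℂ Hs) : Set Hs))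
    {K : Type*} [NormedAddCommGroup K] [InnerProductSpace ℂ K] [CompleteSpace K]
    (b : X → K) (z₀ : X) (hb₀ : b z₀ = 0) (hb : ∀ z, ‖b z‖ < 1)
    (hker_s : ∀ z w : X, ⟪s w, s z⟫_ℂ = (1 - ⟪b w, b z⟫_ℂ)⁻¹)
    (g : X → X → ℂ)
    {M : Type*} [NormedAddCommGroup M] [InnerProductSpace ℂ M] [CompleteSpace M]
    (γ : X → M) (hg : ∀ z w : X, g z w = ⟪γ w, γ z⟫_ℂ)
    (hgdiag : ∀ x, 0 < g x x)
    (l : X → Hl) (hl : ∀ x, l x ≠ 0)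
    (hdense_l : Dense ((Submodule.span ℂ (Set.range l) : Submodule ℂ Hl) : Set Hl))
    (hker_l : ∀ z w : X, ⟪l w, l z⟫_ℂ = g z w * ⟪s w, s z⟫_ℂ)
    (lam : ℕ → X) (hinj : Function.Injective lam)
    (hint : InterpSpace s lam) :
    InterpSpace l lam := by
  classical
  obtain ⟨⟨C, hC, hCb⟩, hsurj_s⟩ := hint
  -- γ is nowhere zero
  have hγ : ∀ x, γ x ≠ 0 := by
    intro x h
    have h1 := hgdiag x
    rw [hg x x, h, inner_zero_left] at h1
    exact lt_irrefl _ h1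
  -- normalized kernels
  set sn : ℕ → Hs := fun i => ((‖s (lam i)‖ : ℂ))⁻¹ • s (lam i) with hsn
  set ln : ℕ → Hl := fun i => ((‖l (lam i)‖ : ℂ))⁻¹ • l (lam i) with hln
  set un : ℕ → M := fun i => ((‖γ (lam i)‖ : ℂ))⁻¹ • γ (lam i) with hun
  have hunorm : ∀ i, ‖un i‖ = 1 := by
    intro i
    rw [hun]
    simp only [norm_smul, norm_inv, Complex.norm_real]
    rw [Real.norm_eq_abs, abs_of_nonneg (norm_nonneg _)]
    rw [inv_mul_cancel₀ (norm_ne_zero_iff.2 (hγ (lam i)))]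
  -- norm factorization for l
  have hnl : ∀ i, ‖l (lam i)‖ = ‖γ (lam i)‖ * ‖s (lam i)‖ := by
    intro i
    have h1 := hker_l (lam i) (lam i)
    rw [hg (lam i) (lam i)] at h1
    rw [inner_self_eq_norm_sq_to_K, inner_self_eq_norm_sq_to_K,
      inner_self_eq_norm_sq_to_K] at h1
    have h2' : (‖l (lam i)‖ ^ 2 : ℝ) = ‖γ (lam i)‖ ^ 2 * ‖s (lam i)‖ ^ 2 := by
      exact_mod_cast h1
    have h2 : (‖l (lam i)‖ ^ 2 : ℝ) = (‖γ (lam i)‖ * ‖s (lam i)‖) ^ 2 := by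
      rw [h2', mul_pow]
    have h4 := congrArg Real.sqrt h2
    rwa [Real.sqrt_sq (norm_nonneg _), Real.sqrt_sq (by positivity)] at h4
  -- the Gram matrix of ln is the Schur product of those of un and sn
  have hK1 : ∀ i j, ⟪ln i, ln j⟫_ℂ = ⟪un i, un j⟫_ℂ * ⟪sn i, sn j⟫_ℂ := by
    intro i j
    rw [hln, hun, hsn]
    simp only [inner_smul_left, inner_smul_right, map_inv₀, Complex.conj_ofReal]
    have h1 := hker_l (lam j) (lam i)
    rw [hg (lam j) (lam i)] at h1
    rw [h1, hnl i, hnl j]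
    push_cast
    field_simp
  -- inner products against normalized kernels
  have hsn_inner : ∀ (i : ℕ) (f : Hs),
      ⟪sn i, f⟫_ℂ = ⟪s (lam i), f⟫_ℂ / ((‖s (lam i)‖ : ℝ) : ℂ) := by
    intro i f
    rw [hsn]
    simp only [inner_smul_left, map_inv₀, Complex.conj_ofReal]
    rw [div_eq_inv_mul]
  have hln_inner : ∀ (i : ℕ) (f : Hl),
      ⟪ln i, f⟫_ℂ = ⟪l (lam i), f⟫_ℂ / ((‖l (lam i)‖ : ℝ) : ℂ) := by
    intro i f
    rw [hln]
    simp only [inner_smul_left, map_inv₀, Complex.conj_ofReal]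
    rw [div_eq_inv_mul]
  -- analysis bound for sn
  have hanal_s : ∀ f : Hs, ∀ F : Finset ℕ, ∑ i ∈ F, ‖⟪sn i, f⟫_ℂ‖ ^ 2 ≤ C * ‖f‖ ^ 2 := by
    intro f F
    have : ∀ i, ‖⟪sn i, f⟫_ℂ‖ ^ 2 = ‖⟪s (lam i), f⟫_ℂ‖ ^ 2 / ‖s (lam i)‖ ^ 2 := by
      intro i
      rw [hsn_inner i f, norm_div, div_pow]
      congr 1
      rw [Complex.norm_real, Real.norm_eq_abs, abs_of_nonneg (norm_nonneg _)]
    calc ∑ i ∈ F, ‖⟪sn i, f⟫_ℂ‖ ^ 2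
        = ∑ i ∈ F, ‖⟪s (lam i), f⟫_ℂ‖ ^ 2 / ‖s (lam i)‖ ^ 2 :=
          Finset.sum_congr rfl fun i _ => this i
      _ ≤ C * ‖f‖ ^ 2 := hCb f F
  -- surjectivity for sn
  have hsurj_sn : ∀ a : ℕ → ℂ, Memℓp a 2 → ∃ f : Hs, ∀ i, ⟪sn i, f⟫_ℂ = a i := by
    intro a ha
    obtain ⟨f, hf⟩ := hsurj_s a ha
    exact ⟨f, fun i => by rw [hsn_inner i f, hf i]⟩
  -- synthesis bound for sn
  have hsynth_s := aux_synth_of_anal sn C hC.le hanal_s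
  -- lower bound for sn from surjectivity
  obtain ⟨A_s, hA_s⟩ := aux_exists_analysisCLM sn C hC.le hanal_s
  obtain ⟨δ, hδ, hlow_s⟩ := aux_lower_of_surj sn A_s hA_s hsurj_sn
  -- transfer both bounds to ln via the Schur trick
  have hsynth_l : ∀ (F : Finset ℕ) (c : ℕ → ℂ),
      ‖∑ i ∈ F, c i • ln i‖ ^ 2 ≤ C * ∑ i ∈ F, ‖c i‖ ^ 2 := by
    intro F c
    obtain ⟨n, d, hid, hsq⟩ := aux_schur_key un hunorm sn ln hK1 F c
    rw [hid]
    calc ∑ k, ‖∑ i ∈ F, d k i • sn i‖ ^ 2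
        ≤ ∑ k, C * ∑ i ∈ F, ‖d k i‖ ^ 2 :=
          Finset.sum_le_sum fun k _ => hsynth_s F (d k)
      _ = C * ∑ i ∈ F, ∑ k, ‖d k i‖ ^ 2 := by
          rw [← Finset.mul_sum, Finset.sum_comm]
      _ = C * ∑ i ∈ F, ‖c i‖ ^ 2 := by
          congr 1
          exact Finset.sum_congr rfl fun i hi => hsq i hi
  have hlow_l : ∀ (F : Finset ℕ) (c : ℕ → ℂ),
      δ * ∑ i ∈ F, ‖c i‖ ^ 2 ≤ ‖∑ i ∈ F, c i • ln i‖ ^ 2 := by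
    intro F c
    obtain ⟨n, d, hid, hsq⟩ := aux_schur_key un hunorm sn ln hK1 F c
    rw [hid]
    calc δ * ∑ i ∈ F, ‖c i‖ ^ 2
        = δ * ∑ i ∈ F, ∑ k, ‖d k i‖ ^ 2 := by
          congr 1
          exact (Finset.sum_congr rfl fun i hi => (hsq i hi).symm)
      _ = ∑ k, δ * ∑ i ∈ F, ‖d k i‖ ^ 2 := by
          rw [← Finset.mul_sum, Finset.sum_comm]
      _ ≤ ∑ k, ‖∑ i ∈ F, d k i • sn i‖ ^ 2 :=
          Finset.sum_le_sum fun k _ => hlow_s F (d k)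
  -- analysis bound for ln
  have hanal_l := aux_anal_of_synth ln C hC.le hsynth_l
  -- conclusion
  constructor
  · refine ⟨C, hC, fun f F => ?_⟩
    have : ∀ i, ‖⟪l (lam i), f⟫_ℂ‖ ^ 2 / ‖l (lam i)‖ ^ 2 = ‖⟪ln i, f⟫_ℂ‖ ^ 2 := by
      intro i
      rw [hln_inner i f, norm_div, div_pow]
      congr 2
      rw [Complex.norm_real, Real.norm_eq_abs, abs_of_nonneg (norm_nonneg _)]
    calc ∑ i ∈ F, ‖⟪l (lam i), f⟫_ℂ‖ ^ 2 / ‖l (lam i)‖ ^ 2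
        = ∑ i ∈ F, ‖⟪ln i, f⟫_ℂ‖ ^ 2 := Finset.sum_congr rfl fun i _ => this i
      _ ≤ C * ‖f‖ ^ 2 := hanal_l f F
  · intro a ha
    obtain ⟨A_l, hA_l⟩ := aux_exists_analysisCLM ln C hC.le hanal_l
    obtain ⟨f, hf⟩ := aux_onto_of_bounds ln A_l hA_l δ hδ hlow_l a ha
    refine ⟨f, fun i => ?_⟩
    rw [← hln_inner i f]
    exact hf i
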